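/- Consider a definably complete locally o-minimal expansion 𝓕 = (F, <, +, ·, 0, 1, …) of an ordered field. Let K be a bounded closed definable set and f : K → F a locally bounded definable function (not necessarily continuous). Then f is bounded. -/

import Mathlib

open FirstOrder Set Topology Filter

section Defs

variable {F : Type*}

/-- A subset of `F^α` is definable (with parameters) in the structure. -/
def IsDef (L : FirstOrder.Language) [L.Structure F] {α : Type} (s : Set (α → F)) : Prop :=
  Set.Definable (Set.univ : Set F) L s

/-- The structure is an expansion of the ordered field `F`: the order, addition and
multiplication are definable. -/
def IsOrderedFieldExpansion (L : FirstOrder.Language) [L.Structure F]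
    [Field F] [LinearOrder F] [IsStrictOrderedRing F] : Prop :=
  IsDef L {v : Fin 2 → F | v 0 < v 1} ∧
  IsDef L {v : Fin 3 → F | v 0 + v 1 = v 2} ∧
  IsDef L {v : Fin 3 → F | v 0 * v 1 = v 2}

/-- The structure is an expansion of the ordered (additive) group `F`. -/
def IsOrderedGroupExpansion (L : FirstOrder.Language) [L.Structure F]
    [AddCommGroup F] [LinearOrder F] [IsOrderedAddMonoid F] : Prop :=
  IsDef L {v : Fin 2 → F | v 0 < v 1} ∧
  IsDef L {v : Fin 3 → F | v 0 + v 1 = v 2}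

/-- The structure is an expansion of the dense linear order `F`. -/
def IsOrderExpansion (L : FirstOrder.Language) [L.Structure F] [LinearOrder F] : Prop :=
  IsDef L {v : Fin 2 → F | v 0 < v 1}

/-- Definable completeness: every nonempty definable subset of `F` which is bounded
above (below) has a supremum (infimum) in `F`; equivalently every definable subset of `F`
has a supremum and an infimum in `F ∪ {±∞}`. -/
def DefinablyComplete (L : FirstOrder.Language) [L.Structure F] [LinearOrder F] : Prop :=
  ∀ s : Set F, IsDef L {v : Fin 1 → F | v 0 ∈ s} → s.Nonempty →
    (BddAbove s → ∃ a, IsLUB s a) ∧ (BddBelow s → ∃ a, IsGLB s a)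

/-- Local o-minimality: every definable subset of `F` is, near each point, a finite union
of points and open intervals. -/
def LocallyOMinimal (L : FirstOrder.Language) [L.Structure F] [LinearOrder F] : Prop :=
  ∀ s : Set F, IsDef L {v : Fin 1 → F | v 0 ∈ s} → ∀ a : F,
    ∃ b c : F, b < a ∧ a < c ∧ ∃ (P : Finset F) (I : Finset (F × F)),
      s ∩ Set.Ioo b c = ↑P ∪ ⋃ p ∈ I, Set.Ioo p.1 p.2

/-- A subset of `F^α` is bounded if it is contained in a box. -/
def IsBdd [LE F] {α : Type} (s : Set (α → F)) : Prop :=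
  ∃ a b : F, ∀ v ∈ s, ∀ i, a ≤ v i ∧ v i ≤ b

/-- `s` is closed in the subspace `Y` (for `s ⊆ Y`). -/
def ClosedIn {X : Type*} [TopologicalSpace X] (Y s : Set X) : Prop :=
  Y ∩ closure s ⊆ s

/-- `s` is open in the subspace `Y`. -/
def OpenIn {X : Type*} [TopologicalSpace X] (Y s : Set X) : Prop :=
  ∃ V, IsOpen V ∧ s = Y ∩ V

/-- A map `f` defined on `X ⊆ F^α` with values in `F^β` is definable: its graph is a
definable subset of `F^(α ⊕ β)`. -/
def IsDefFunOn (L : FirstOrder.Language) [L.Structure F] {α β : Type}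
    (X : Set (α → F)) (f : (α → F) → (β → F)) : Prop :=
  IsDef L {v : α ⊕ β → F | (v ∘ Sum.inl) ∈ X ∧ f (v ∘ Sum.inl) = v ∘ Sum.inr}

/-- An `F`-valued map defined on `X ⊆ F^α` is definable. -/
def IsDefFunOn₁ (L : FirstOrder.Language) [L.Structure F] {α : Type}
    (X : Set (α → F)) (f : (α → F) → F) : Prop :=
  IsDef L {v : α ⊕ Unit → F | (v ∘ Sum.inl) ∈ X ∧ f (v ∘ Sum.inl) = v (Sum.inr ())}

/-- `f : X → Y` is definably proper: preimages of definable closed bounded subsets of `Y`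
are closed and bounded. -/
def IsDefProper (L : FirstOrder.Language) [L.Structure F] [LE F] [TopologicalSpace F]
    {α β : Type} (X : Set (α → F)) (Y : Set (β → F)) (f : (α → F) → (β → F)) : Prop :=
  ∀ K : Set (β → F), IsDef L K → K ⊆ Y → IsClosed K → IsBdd K →
    IsClosed {x | x ∈ X ∧ f x ∈ K} ∧ IsBdd {x | x ∈ X ∧ f x ∈ K}

/-- `f : X → Y` is definably identifying: it is surjective onto `Y` and a definable subset
`K` of `Y` is closed in `Y` whenever `f⁻¹(K)` is closed in `X`. -/
def IsDefIdentifying (L : FirstOrder.Language) [L.Structure F] [TopologicalSpace F]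
    {α β : Type} (X : Set (α → F)) (Y : Set (β → F)) (f : (α → F) → (β → F)) : Prop :=
  (∀ y ∈ Y, ∃ x ∈ X, f x = y) ∧
  ∀ K : Set (β → F), IsDef L K → K ⊆ Y →
    ClosedIn X {x | x ∈ X ∧ f x ∈ K} → ClosedIn Y K

/-- A definable curve in `X` defined on the interval `(0, ε)`. -/
def IsDefCurve (L : FirstOrder.Language) [L.Structure F] [LinearOrder F] [Zero F]
    [TopologicalSpace F] {α : Type} (ε : F) (X : Set (α → F)) (γ : F → (α → F)) : Prop :=
  IsDef L {v : Unit ⊕ α → F |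
      v (Sum.inl ()) ∈ Set.Ioo 0 ε ∧ γ (v (Sum.inl ())) = v ∘ Sum.inr} ∧
  ContinuousOn γ (Set.Ioo 0 ε) ∧ MapsTo γ (Set.Ioo 0 ε) X

/-- The curve `γ : (0,ε) → F^α` tends to `x` as `t → 0⁺`. -/
def CurveTendsto [LinearOrder F] [Zero F] [TopologicalSpace F] {α : Type}
    (ε : F) (γ : F → (α → F)) (x : α → F) : Prop :=
  Filter.Tendsto γ (nhdsWithin 0 (Set.Ioo 0 ε)) (nhds x)

/-- The curve `γ : (0,ε) → F^α` is completable in `X`. -/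
def Completable [LinearOrder F] [Zero F] [TopologicalSpace F] {α : Type}
    (ε : F) (X : Set (α → F)) (γ : F → (α → F)) : Prop :=
  ∃ x ∈ X, CurveTendsto ε γ x

/-- `E ⊆ F^(α⊕α)` is a definable equivalence relation on `X ⊆ F^α`; the pair `(x, y)` is
encoded as `Sum.elim x y`. -/
def IsDefEquivOn (L : FirstOrder.Language) [L.Structure F] {α : Type}
    (X : Set (α → F)) (E : Set (α ⊕ α → F)) : Prop :=
  IsDef L E ∧
  (∀ v ∈ E, v ∘ Sum.inl ∈ X ∧ v ∘ Sum.inr ∈ X) ∧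
  (∀ x ∈ X, Sum.elim x x ∈ E) ∧
  (∀ x y : α → F, Sum.elim x y ∈ E → Sum.elim y x ∈ E) ∧
  (∀ x y z : α → F, Sum.elim x y ∈ E → Sum.elim y z ∈ E → Sum.elim x z ∈ E)

/-- `f : X → Y` is a definable quotient of `X` by the definable equivalence relation `E`:
a definable, continuous, definably identifying map onto the definable set `Y` whose fibers
are exactly the equivalence classes of `E`. -/
def IsDefQuotient (L : FirstOrder.Language) [L.Structure F] [TopologicalSpace F]
    {α β : Type} (X : Set (α → F)) (E : Set (α ⊕ α → F))
    (Y : Set (β → F)) (f : (α → F) → (β → F)) : Prop :=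
  IsDef L Y ∧ IsDefFunOn L X f ∧ ContinuousOn f X ∧ MapsTo f X Y ∧
  IsDefIdentifying L X Y f ∧
  ∀ x ∈ X, ∀ x' ∈ X, (f x = f x' ↔ Sum.elim x x' ∈ E)

/-- A definable group: a definable set `G ⊆ F^κ` with definable continuous group
operations. -/
structure IsDefGroup (L : FirstOrder.Language) [L.Structure F] [TopologicalSpace F]
    {κ : Type} (G : Set (κ → F)) (mul : (κ → F) → (κ → F) → (κ → F))
    (inv : (κ → F) → (κ → F)) (e : κ → F) : Prop where
  defG : IsDef L G
  defMul : IsDef L {v : (κ ⊕ κ) ⊕ κ → F |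
    (v ∘ Sum.inl ∘ Sum.inl) ∈ G ∧ (v ∘ Sum.inl ∘ Sum.inr) ∈ G ∧
    mul (v ∘ Sum.inl ∘ Sum.inl) (v ∘ Sum.inl ∘ Sum.inr) = v ∘ Sum.inr}
  defInv : IsDef L {v : κ ⊕ κ → F | (v ∘ Sum.inl) ∈ G ∧ inv (v ∘ Sum.inl) = v ∘ Sum.inr}
  contMul : ContinuousOn (fun p : (κ → F) × (κ → F) => mul p.1 p.2) (G ×ˢ G)
  contInv : ContinuousOn inv G
  e_mem : e ∈ G
  mul_mem : ∀ g ∈ G, ∀ h ∈ G, mul g h ∈ G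
  inv_mem : ∀ g ∈ G, inv g ∈ G
  mul_assoc' : ∀ g ∈ G, ∀ h ∈ G, ∀ k ∈ G, mul (mul g h) k = mul g (mul h k)
  one_mul' : ∀ g ∈ G, mul e g = g
  mul_one' : ∀ g ∈ G, mul g e = g
  inv_mul' : ∀ g ∈ G, mul (inv g) g = e
  mul_inv' : ∀ g ∈ G, mul g (inv g) = e

/-- A definable (continuous) action of the definable group `G` on the definable set `X`,
making `X` a definable `G`-set. -/
structure IsDefAction (L : FirstOrder.Language) [L.Structure F] [TopologicalSpace F]
    {κ μ : Type} (G : Set (κ → F)) (mul : (κ → F) → (κ → F) → (κ → F)) (e : κ → F)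
    (X : Set (μ → F)) (act : (κ → F) → (μ → F) → (μ → F)) : Prop where
  defAct : IsDef L {v : (κ ⊕ μ) ⊕ μ → F |
    (v ∘ Sum.inl ∘ Sum.inl) ∈ G ∧ (v ∘ Sum.inl ∘ Sum.inr) ∈ X ∧
    act (v ∘ Sum.inl ∘ Sum.inl) (v ∘ Sum.inl ∘ Sum.inr) = v ∘ Sum.inr}
  contAct : ContinuousOn (fun p : (κ → F) × (μ → F) => act p.1 p.2) (G ×ˢ X)
  act_mem : ∀ g ∈ G, ∀ x ∈ X, act g x ∈ X
  act_e : ∀ x ∈ X, act e x = x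
  act_mul : ∀ g ∈ G, ∀ h ∈ G, ∀ x ∈ X, act (mul g h) x = act g (act h x)

end Defs

section Aux

variable {F : Type*} {L : FirstOrder.Language} [L.Structure F]

lemma IsDef.pull {α β : Type} {s : Set (α → F)} (h : IsDef L s) (e : α → β) :
    IsDef L {v : β → F | v ∘ e ∈ s} :=
  h.preimage_comp e

lemma IsDef.exists_elim {α : Type} {k : ℕ} {s : Set (α ⊕ Fin k → F)}
    (h : IsDef L s) : IsDef L {v : α → F | ∃ w : Fin k → F, Sum.elim v w ∈ s} := by
  have h2 : IsDef L _ := Set.Definable.image_comp_sumInl_fin k h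
  convert h2 using 1
  ext v
  constructor
  · rintro ⟨w, hw⟩
    exact ⟨Sum.elim v w, hw, Sum.elim_comp_inl _ _⟩
  · rintro ⟨g, hg, rfl⟩
    refine ⟨g ∘ Sum.inr, ?_⟩
    have : Sum.elim (g ∘ Sum.inl) (g ∘ Sum.inr) = g := by
      funext x; cases x <;> rfl
    rwa [this]

lemma isDef_lt {α : Type} [LT F] (h : IsDef L {v : Fin 2 → F | v 0 < v 1}) (i j : α) :
    IsDef L {v : α → F | v i < v j} := by
  have := h.pull (α := Fin 2) (β := α) ![i, j]
  convert this using 1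
  ext v; simp

lemma isDef_le {α : Type} [LinearOrder F] (h : IsDef L {v : Fin 2 → F | v 0 < v 1}) (i j : α) :
    IsDef L {v : α → F | v i ≤ v j} := by
  have : IsDef L _ := (isDef_lt h j i).compl
  convert this using 1
  ext v
  simp

lemma isDef_eqc {α : Type} [LinearOrder F] (h : IsDef L {v : Fin 2 → F | v 0 < v 1}) (i j : α) :
    IsDef L {v : α → F | v i = v j} := by
  have : IsDef L _ := (isDef_le h i j).inter (isDef_le h j i)
  convert this using 1
  ext v
  simp [le_antisymm_iff]

lemma isDef_add {α : Type} [Add F] (h : IsDef L {v : Fin 3 → F | v 0 + v 1 = v 2}) (i j k : α) :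
    IsDef L {v : α → F | v i + v j = v k} := by
  have := h.pull (α := Fin 3) (β := α) ![i, j, k]
  convert this using 1
  ext v; simp

lemma isDef_mul {α : Type} [Mul F] (h : IsDef L {v : Fin 3 → F | v 0 * v 1 = v 2}) (i j k : α) :
    IsDef L {v : α → F | v i * v j = v k} := by
  have := h.pull (α := Fin 3) (β := α) ![i, j, k]
  convert this using 1
  ext v; simp

lemma isDef_const {α : Type} (i : α) (c : F) :
    IsDef L {v : α → F | v i = c} := by
  refine ⟨FirstOrder.Language.Term.equal (FirstOrder.Language.Term.var i)
    ((L.con (⟨c, Set.mem_univ c⟩ : (Set.univ : Set F))).term), ?_⟩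
  ext v
  simp [FirstOrder.Language.Term.equal, FirstOrder.Language.Formula.Realize,
    FirstOrder.Language.funMap_eq_coe_constants, FirstOrder.Language.coe_con]

lemma isDef_const_lt {α : Type} [LinearOrder F] (h : IsDef L {v : Fin 2 → F | v 0 < v 1})
    (c : F) (i : α) : IsDef L {v : α → F | c < v i} := by
  have h1 : IsDef L {V : α ⊕ Fin 1 → F | V (Sum.inr 0) = c ∧ V (Sum.inr 0) < V (Sum.inl i)} :=
    (isDef_const (Sum.inr 0) c).inter (isDef_lt h (Sum.inr 0) (Sum.inl i))
  have := h1.exists_elim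
  convert this using 1
  ext v
  constructor
  · intro hv
    exact ⟨fun _ => c, rfl, hv⟩
  · rintro ⟨w, h1, h2⟩
    simp only [Sum.elim_inr, Sum.elim_inl] at h1 h2
    rwa [h1] at h2

end Aux

section Step

variable {F : Type*} [Field F] [LinearOrder F] [IsStrictOrderedRing F] {L : FirstOrder.Language} [L.Structure F]

lemma shrink_step {m : ℕ}
    (hlt : IsDef L {v : Fin 2 → F | v 0 < v 1})
    (hadd : IsDef L {v : Fin 3 → F | v 0 + v 1 = v 2})
    (hmul : IsDef L {v : Fin 3 → F | v 0 * v 1 = v 2})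
    (hdc : DefinablyComplete (F := F) L)
    (a0 b0 : F) (C : F → Set (Fin m → F))
    (hdef : IsDef L {v : Fin 1 ⊕ Fin m → F | 0 < v (Sum.inl 0) ∧ v ∘ Sum.inr ∈ C (v (Sum.inl 0))})
    (hanti : ∀ s t : F, 0 < s → s ≤ t → C t ⊆ C s)
    (hne : ∀ t : F, 0 < t → (C t).Nonempty)
    (hbd : ∀ t : F, 0 < t → ∀ y ∈ C t, ∀ j, a0 ≤ y j ∧ y j ≤ b0)
    (i : Fin m) :
    ∃ (C' : F → Set (Fin m → F)) (c : F),
      IsDef L {v : Fin 1 ⊕ Fin m → F |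
        0 < v (Sum.inl 0) ∧ v ∘ Sum.inr ∈ C' (v (Sum.inl 0))} ∧
      (∀ s t : F, 0 < s → s ≤ t → C' t ⊆ C' s) ∧
      (∀ t : F, 0 < t → (C' t).Nonempty) ∧
      (∀ t : F, 0 < t → C' t ⊆ C t) ∧
      (∀ ε : F, 0 < ε → ∃ t0 : F, 0 < t0 ∧ ∀ t : F, t0 ≤ t → ∀ y ∈ C' t,
        c - ε ≤ y i ∧ y i ≤ c + ε) := by
  classical
  set T : Set (Fin 1 ⊕ Fin m → F) :=
    {v | 0 < v (Sum.inl 0) ∧ v ∘ Sum.inr ∈ C (v (Sum.inl 0))} with hT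
  set P : F → Set F := fun t => {r | ∃ y ∈ C t, y i = r} with hP
  -- definability of each P t
  have hPdef : ∀ t : F, 0 < t → IsDef L {v : Fin 1 → F | v 0 ∈ P t} := by
    intro t ht
    set e₁ : (Fin 1 ⊕ Fin m) → (Fin 1 ⊕ Fin (m + 1)) :=
      Sum.elim (fun _ => Sum.inr 0) (fun j => Sum.inr j.succ) with he₁
    have hs₁ : IsDef L {V : Fin 1 ⊕ Fin (m + 1) → F |
        V ∘ e₁ ∈ T ∧ V (Sum.inr 0) = t ∧ V (Sum.inl 0) = V (Sum.inr i.succ)} := by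
      have : IsDef L _ := (hdef.pull e₁).inter
        ((isDef_const (Sum.inr 0) t).inter (isDef_eqc hlt (Sum.inl 0) (Sum.inr i.succ)))
      exact this
    have h2 := hs₁.exists_elim
    convert h2 using 1
    ext v
    simp only [Set.mem_setOf_eq]
    constructor
    · rintro ⟨y, hy, hyi⟩
      refine ⟨Fin.cons t y, ⟨?_, ?_⟩, by simp, by simp [hyi]⟩
      · simpa [he₁] using ht
      · have h5 : (Sum.elim v (Fin.cons t y) ∘ e₁) ∘ Sum.inr = y := by
          funext j; simp [he₁]
        rw [h5]
        simpa [he₁] using hy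
    · rintro ⟨w, ⟨hpos, hmem⟩, hw0, hvi⟩
      refine ⟨fun j => w j.succ, ?_, ?_⟩
      · have h3 : (Sum.elim v w ∘ e₁) ∘ Sum.inr = fun j => w j.succ := by
          funext j; simp [he₁]
        have h4 : (Sum.elim v w ∘ e₁) (Sum.inl 0) = w 0 := by simp [he₁]
        simp only [Sum.elim_inr] at hw0
        rw [h3, h4] at hmem
        rwa [hw0] at hmem
      · simp only [Sum.elim_inr] at hvi
        exact hvi.symm
  have hglb : ∀ t : F, 0 < t → ∃ a, IsGLB (P t) a := by
    intro t ht
    obtain ⟨y, hy⟩ := hne t ht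
    refine ((hdc (P t) (hPdef t ht) ⟨y i, y, hy, rfl⟩).2 ?_)
    exact ⟨a0, by rintro r ⟨z, hz, rfl⟩; exact (hbd t ht z hz i).1⟩
  set M : Set F := {a | ∃ t : F, 0 < t ∧ IsGLB (P t) a} with hM
  -- definability of M
  have hMdef : IsDef L {v : Fin 1 → F | v 0 ∈ M} := by
    set e₂ : (Fin 1 ⊕ Fin m) → (Fin 2 ⊕ Fin m) :=
      Sum.elim (fun _ => Sum.inl 1) Sum.inr with he₂
    set N : Set (Fin 2 ⊕ Fin m → F) :=
      {V | V ∘ e₂ ∈ T ∧ V (Sum.inr i) < V (Sum.inl 0)} with hN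
    have hNdef : IsDef L N := (hdef.pull e₂).inter (isDef_lt hlt (Sum.inr i) (Sum.inl 0))
    set LB : Set (Fin 2 → F) := {v | ∃ w : Fin m → F, Sum.elim v w ∈ N}ᶜ with hLB
    have hLBdef : IsDef L LB := hNdef.exists_elim.compl
    have hLBiff : ∀ v : Fin 2 → F, 0 < v 1 → (v ∈ LB ↔ v 0 ∈ lowerBounds (P (v 1))) := by
      intro v hv
      rw [hLB]
      simp only [Set.mem_compl_iff, Set.mem_setOf_eq, not_exists]
      constructor
      · rintro h r ⟨y, hy, rfl⟩
        by_contra hlt'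
        refine h y ⟨⟨?_, ?_⟩, ?_⟩
        · simpa [he₂] using hv
        · have h5 : (Sum.elim v y ∘ e₂) ∘ Sum.inr = y := by funext j; simp [he₂]
          rw [h5]
          simpa [he₂] using hy
        · simpa using not_le.mp hlt'
      · intro h y hy
        obtain ⟨⟨hpos, hmem⟩, hlt'⟩ := hy
        have h3 : (Sum.elim v y ∘ e₂) ∘ Sum.inr = y := by funext j; simp [he₂]
        have h4 : (Sum.elim v y ∘ e₂) (Sum.inl 0) = v 1 := by simp [he₂]
        rw [h3, h4] at hmem
        have := h ⟨y, hmem, rfl⟩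
        simp only [Sum.elim_inr, Sum.elim_inl] at hlt'
        exact absurd hlt' (not_lt.mpr this)
    set e₃ : Fin 2 → (Fin 2 ⊕ Fin 1) := ![Sum.inr 0, Sum.inl 1] with he₃
    set N₂ : Set (Fin 2 ⊕ Fin 1 → F) :=
      {V | V ∘ e₃ ∈ LB ∧ V (Sum.inl 0) < V (Sum.inr 0)} with hN₂
    have hN₂def : IsDef L N₂ := (hLBdef.pull e₃).inter (isDef_lt hlt (Sum.inl 0) (Sum.inr 0))
    set MX : Set (Fin 2 → F) := {v | ∃ w : Fin 1 → F, Sum.elim v w ∈ N₂}ᶜ with hMX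
    have hMXdef : IsDef L MX := hN₂def.exists_elim.compl
    have hMXiff : ∀ v : Fin 2 → F, (v ∈ MX ↔ ∀ b : F, ![b, v 1] ∈ LB → b ≤ v 0) := by
      intro v
      rw [hMX]
      simp only [Set.mem_compl_iff, Set.mem_setOf_eq, not_exists]
      constructor
      · intro h b hb
        by_contra hbl
        refine h (fun _ => b) ⟨?_, ?_⟩
        · have h5 : (Sum.elim v (fun _ => b)) ∘ e₃ = ![b, v 1] := by
            funext j; fin_cases j <;> simp [he₃]
          rw [h5]
          exact hb
        · simpa using not_le.mp hbl
      · intro h w hw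
        obtain ⟨h1, h2⟩ := hw
        have h5 : (Sum.elim v w) ∘ e₃ = ![w 0, v 1] := by
          funext j; fin_cases j <;> simp [he₃]
        rw [h5] at h1
        have := h (w 0) h1
        simp only [Sum.elim_inl, Sum.elim_inr] at h2
        exact absurd h2 (not_lt.mpr this)
    set Mset : Set (Fin 2 → F) := ({v | 0 < v 1} ∩ LB) ∩ MX with hMset
    have hMsetdef : IsDef L Mset := ((isDef_const_lt hlt 0 1).inter hLBdef).inter hMXdef
    set e₄ : Fin 2 → (Fin 1 ⊕ Fin 1) := ![Sum.inl 0, Sum.inr 0] with he₄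
    have h6 : IsDef L {V : Fin 1 ⊕ Fin 1 → F | V ∘ e₄ ∈ Mset} := hMsetdef.pull e₄
    have h7 := h6.exists_elim
    convert h7 using 1
    ext v
    simp only [Set.mem_setOf_eq]
    constructor
    · rintro ⟨t, ht, hg⟩
      refine ⟨fun _ => t, ?_⟩
      have h5 : (Sum.elim v (fun _ : Fin 1 => t)) ∘ e₄ = ![v 0, t] := by
        funext j; fin_cases j <;> simp [he₄]
      show (Sum.elim v (fun _ : Fin 1 => t)) ∘ e₄ ∈ Mset
      rw [h5, hMset]
      refine ⟨⟨by simpa using ht, ?_⟩, ?_⟩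
      · rw [hLBiff ![v 0, t] (by simpa using ht)]
        simpa using hg.1
      · rw [hMXiff ![v 0, t] ]
        intro b hb
        have hb1 : (![b, t] : Fin 2 → F) ∈ LB := by
          exact hb
        have hb2 : b ∈ lowerBounds (P t) := by
          have h9 := (hLBiff ![b, t] (by simpa using ht)).mp hb1
          simpa using h9
        simpa using hg.2 hb2
    · rintro ⟨w, hw⟩
      have h5 : (Sum.elim v w) ∘ e₄ = ![v 0, w 0] := by
        funext j; fin_cases j <;> simp [he₄]
      have hw' : (![v 0, w 0] : Fin 2 → F) ∈ Mset := by
        rw [← h5]; exact hw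
      rw [hMset] at hw'
      obtain ⟨⟨hpos, hlb⟩, hmx⟩ := hw'
      simp only [Set.mem_setOf_eq] at hpos
      have hpos' : (0:F) < w 0 := by simpa using hpos
      refine ⟨w 0, hpos', ?_, ?_⟩
      · have := (hLBiff ![v 0, w 0] (by simpa using hpos')).mp hlb
        simpa using this
      · intro b hb
        have := (hMXiff ![v 0, w 0]).mp hmx b
        change ![b, w 0] ∈ LB → b ≤ v 0 at this
        have hb' : (![b, w 0] : Fin 2 → F) ∈ LB := by
          rw [hLBiff _ (by simpa using hpos')]
          simpa using hb
        refine this ?_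
        convert hb' using 2
  have hMne : M.Nonempty := by
    obtain ⟨a, ha⟩ := hglb 1 one_pos
    exact ⟨a, 1, one_pos, ha⟩
  have hMbdd : BddAbove M := by
    refine ⟨b0, ?_⟩
    rintro a ⟨t, ht, hg⟩
    obtain ⟨y, hy⟩ := hne t ht
    exact le_trans (hg.1 ⟨y, hy, rfl⟩) (hbd t ht y hy i).2
  obtain ⟨c, hc⟩ := (hdc M hMdef hMne).1 hMbdd
  refine ⟨fun t => {y | y ∈ C t ∧ y i ≤ c + t⁻¹}, c, ?_, ?_, ?_, ?_, ?_⟩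
  · -- definability of the new family
    set R : Set ((Fin 1 ⊕ Fin m) ⊕ Fin 4 → F) :=
      {V | V (Sum.inr 1) = 1 ∧ V (Sum.inr 3) = c ∧
        V (Sum.inl (Sum.inl 0)) * V (Sum.inr 0) = V (Sum.inr 1) ∧
        V (Sum.inr 3) + V (Sum.inr 0) = V (Sum.inr 2) ∧
        V (Sum.inl (Sum.inr i)) ≤ V (Sum.inr 2)} with hR
    have hRdef : IsDef L R := by
      have hEq : R = {V : (Fin 1 ⊕ Fin m) ⊕ Fin 4 → F | V (Sum.inr 1) = 1} ∩
          ({V | V (Sum.inr 3) = c} ∩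
          ({V | V (Sum.inl (Sum.inl 0)) * V (Sum.inr 0) = V (Sum.inr 1)} ∩
          ({V | V (Sum.inr 3) + V (Sum.inr 0) = V (Sum.inr 2)} ∩
          {V | V (Sum.inl (Sum.inr i)) ≤ V (Sum.inr 2)}))) := by
        ext V
        simp only [hR, Set.mem_inter_iff, Set.mem_setOf_eq]
      rw [hEq]
      exact (isDef_const (Sum.inr 1) (1:F)).inter ((isDef_const (Sum.inr 3) c).inter
        ((isDef_mul hmul (Sum.inl (Sum.inl 0)) (Sum.inr 0) (Sum.inr 1)).inter
        ((isDef_add hadd (Sum.inr 3) (Sum.inr 0) (Sum.inr 2)).inter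
        (isDef_le hlt (Sum.inl (Sum.inr i)) (Sum.inr 2)))))
    have hQ := hRdef.exists_elim
    have hTQ : IsDef L _ := hdef.inter hQ
    convert hTQ using 1
    ext v
    simp only [Set.mem_inter_iff, Set.mem_setOf_eq]
    constructor
    · rintro ⟨hpos, hmem, hle⟩
      refine ⟨⟨hpos, hmem⟩, ![(v (Sum.inl 0))⁻¹, 1, c + (v (Sum.inl 0))⁻¹, c], ?_⟩
      refine ⟨by simp, by simp, ?_, ?_, ?_⟩
      · simp [mul_inv_cancel₀ (ne_of_gt hpos)]
      · simp
      · simpa using hle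
    · rintro ⟨⟨hpos, hmem⟩, w, hw1, hw3, hm, ha, hle⟩
      simp only [Sum.elim_inl, Sum.elim_inr] at hw1 hw3 hm ha hle
      refine ⟨hpos, hmem, ?_⟩
      rw [hw1] at hm
      rw [hw3] at ha
      have hw0 : w 0 = (v (Sum.inl 0))⁻¹ := (inv_eq_of_mul_eq_one_right hm).symm
      rw [hw0] at ha
      rw [ha]
      exact hle
  · rintro s t hs hst y ⟨h1, h2⟩
    refine ⟨hanti s t hs hst h1, h2.trans ?_⟩
    have h3 : t⁻¹ ≤ s⁻¹ := by
      have := hs.trans_le hst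
      gcongr
    linarith
  · intro t ht
    obtain ⟨a, ha⟩ := hglb t ht
    have hac : a ≤ c := hc.1 ⟨t, ht, ha⟩
    have hex : ∃ r ∈ P t, r < a + t⁻¹ := by
      by_contra h
      push_neg at h
      have hlb : a + t⁻¹ ∈ lowerBounds (P t) := fun r hr => h r hr
      have h2 := ha.2 hlb
      have h3 : (0:F) < t⁻¹ := inv_pos.2 ht
      linarith
    obtain ⟨r, ⟨y, hy, rfl⟩, hr⟩ := hex
    exact ⟨y, hy, le_of_lt (lt_of_lt_of_le hr (by linarith))⟩
  · exact fun t ht y hy => hy.1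
  · intro ε hε
    obtain ⟨a, haM, ha1, _⟩ := hc.exists_between (show c - ε < c by linarith)
    obtain ⟨t1, ht1, hg1⟩ := haM
    refine ⟨max t1 ε⁻¹, lt_of_lt_of_le ht1 (le_max_left _ _), ?_⟩
    intro t htt y hy
    have ht : 0 < t := lt_of_lt_of_le (lt_of_lt_of_le ht1 (le_max_left _ _)) htt
    have hyC : y ∈ C t1 := hanti t1 t ht1 (le_trans (le_max_left _ _) htt) hy.1
    constructor
    · have := hg1.1 ⟨y, hyC, rfl⟩
      linarith
    · have hεi : ε⁻¹ ≤ t := le_trans (le_max_right _ _) htt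
      have hti : t⁻¹ ≤ ε := by
        have h4 : t⁻¹ ≤ (ε⁻¹)⁻¹ := by
          have := inv_pos.2 hε
          gcongr
        rwa [inv_inv] at h4
      have := hy.2
      linarith

end Step

section Rest

variable {F : Type*} [Field F] [LinearOrder F] [IsStrictOrderedRing F] {L : FirstOrder.Language} [L.Structure F]

lemma shrink_all {m : ℕ}
    (hlt : IsDef L {v : Fin 2 → F | v 0 < v 1})
    (hadd : IsDef L {v : Fin 3 → F | v 0 + v 1 = v 2})
    (hmul : IsDef L {v : Fin 3 → F | v 0 * v 1 = v 2})
    (hdc : DefinablyComplete (F := F) L)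
    (a0 b0 : F) (C : F → Set (Fin m → F))
    (hdef : IsDef L {v : Fin 1 ⊕ Fin m → F | 0 < v (Sum.inl 0) ∧ v ∘ Sum.inr ∈ C (v (Sum.inl 0))})
    (hanti : ∀ s t : F, 0 < s → s ≤ t → C t ⊆ C s)
    (hne : ∀ t : F, 0 < t → (C t).Nonempty)
    (hbd : ∀ t : F, 0 < t → ∀ y ∈ C t, ∀ j, a0 ≤ y j ∧ y j ≤ b0)
    (S : Finset (Fin m)) :
    ∃ C' : F → Set (Fin m → F),
      IsDef L {v : Fin 1 ⊕ Fin m → F |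
        0 < v (Sum.inl 0) ∧ v ∘ Sum.inr ∈ C' (v (Sum.inl 0))} ∧
      (∀ s t : F, 0 < s → s ≤ t → C' t ⊆ C' s) ∧
      (∀ t : F, 0 < t → (C' t).Nonempty) ∧
      (∀ t : F, 0 < t → C' t ⊆ C t) ∧
      (∀ i ∈ S, ∃ c : F, ∀ ε : F, 0 < ε → ∃ t0 : F, 0 < t0 ∧ ∀ t : F, t0 ≤ t →
        ∀ y ∈ C' t, c - ε ≤ y i ∧ y i ≤ c + ε) := by
  classical
  induction S using Finset.induction_on with
  | empty =>
    refine ⟨C, hdef, hanti, hne, fun t ht => subset_rfl, ?_⟩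
    intro i hi
    exact absurd hi (Finset.notMem_empty i)
  | @insert i S hiS ih =>
    obtain ⟨C1, h1def, h1anti, h1ne, h1sub, h1est⟩ := ih
    have h1bd : ∀ t : F, 0 < t → ∀ y ∈ C1 t, ∀ j, a0 ≤ y j ∧ y j ≤ b0 :=
      fun t ht y hy => hbd t ht y (h1sub t ht hy)
    obtain ⟨C2, c, h2def, h2anti, h2ne, h2sub, h2est⟩ :=
      shrink_step hlt hadd hmul hdc a0 b0 C1 h1def h1anti h1ne h1bd i
    refine ⟨C2, h2def, h2anti, h2ne,
      fun t ht => (h2sub t ht).trans (h1sub t ht), ?_⟩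
    intro j hj
    rcases Finset.mem_insert.mp hj with rfl | hj
    · exact ⟨c, h2est⟩
    · obtain ⟨c', hc'⟩ := h1est j hj
      refine ⟨c', fun ε hε => ?_⟩
      obtain ⟨t0, ht0, hprop⟩ := hc' ε hε
      exact ⟨t0, ht0, fun t htt y hy =>
        hprop t htt y (h2sub t (lt_of_lt_of_le ht0 htt) hy)⟩

lemma exists_cluster [TopologicalSpace F] [OrderTopology F] {m : ℕ}
    (hlt : IsDef L {v : Fin 2 → F | v 0 < v 1})
    (hadd : IsDef L {v : Fin 3 → F | v 0 + v 1 = v 2})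
    (hmul : IsDef L {v : Fin 3 → F | v 0 * v 1 = v 2})
    (hdc : DefinablyComplete (F := F) L)
    (a0 b0 : F) (C : F → Set (Fin m → F))
    (hdef : IsDef L {v : Fin 1 ⊕ Fin m → F | 0 < v (Sum.inl 0) ∧ v ∘ Sum.inr ∈ C (v (Sum.inl 0))})
    (hanti : ∀ s t : F, 0 < s → s ≤ t → C t ⊆ C s)
    (hne : ∀ t : F, 0 < t → (C t).Nonempty)
    (hbd : ∀ t : F, 0 < t → ∀ y ∈ C t, ∀ j, a0 ≤ y j ∧ y j ≤ b0) :
    ∃ x : Fin m → F, ∀ t : F, 0 < t → x ∈ closure (C t) := by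
  classical
  obtain ⟨C', hdef', hanti', hne', hsub', hest⟩ :=
    shrink_all hlt hadd hmul hdc a0 b0 C hdef hanti hne hbd Finset.univ
  choose c hc using fun i : Fin m => hest i (Finset.mem_univ i)
  set y : F → (Fin m → F) :=
    fun t => if h : 0 < t then (hne' t h).choose else (fun _ => 0) with hy
  have hyC : ∀ t : F, 0 < t → y t ∈ C' t := by
    intro t ht
    simp only [hy, dif_pos ht]
    exact (hne' t ht).choose_spec
  have htend : Filter.Tendsto y Filter.atTop (nhds c) := by
    rw [tendsto_pi_nhds]
    intro i
    rw [tendsto_order]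
    constructor
    · intro b hb
      obtain ⟨t0, ht0, hp⟩ := hc i ((c i - b) / 2) (by linarith)
      filter_upwards [Filter.eventually_ge_atTop (max t0 1)] with t htt
      have ht : (0:F) < t := lt_of_lt_of_le one_pos (le_trans (le_max_right _ _) htt)
      have := (hp t (le_trans (le_max_left _ _) htt) (y t) (hyC t ht)).1
      linarith
    · intro b hb
      obtain ⟨t0, ht0, hp⟩ := hc i ((b - c i) / 2) (by linarith)
      filter_upwards [Filter.eventually_ge_atTop (max t0 1)] with t htt
      have ht : (0:F) < t := lt_of_lt_of_le one_pos (le_trans (le_max_right _ _) htt)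
      have := (hp t (le_trans (le_max_left _ _) htt) (y t) (hyC t ht)).2
      linarith
  refine ⟨c, fun t ht => ?_⟩
  have hev : ∀ᶠ s in Filter.atTop, y s ∈ C t := by
    filter_upwards [Filter.eventually_ge_atTop (max t 1)] with s hs
    have hs0 : (0:F) < s := lt_of_lt_of_le one_pos (le_trans (le_max_right _ _) hs)
    exact hanti t s ht (le_trans (le_max_left _ _) hs) (hsub' s hs0 (hyC s hs0))
  exact mem_closure_of_tendsto htend hev

end Rest

/-- a locally bounded definable function on a closed bounded definable
set is bounded. -/
theorem statement_18
    {F : Type*} [Field F] [LinearOrder F] [IsStrictOrderedRing F] [TopologicalSpace F] [OrderTopology F]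
    (L : FirstOrder.Language) [L.Structure F]
    (hfield : IsOrderedFieldExpansion (F := F) L)
    (hdc : DefinablyComplete (F := F) L)
    (hlo : LocallyOMinimal (F := F) L)
    {m : ℕ} (K : Set (Fin m → F))
    (hKdef : IsDef L K) (hKclosed : IsClosed K) (hKbdd : IsBdd K)
    (f : (Fin m → F) → F) (hfdef : IsDefFunOn₁ L K f)
    (hloc : ∀ x ∈ K, ∃ U : Set (Fin m → F), IsDef L U ∧ U ⊆ K ∧ x ∈ U ∧ OpenIn K U ∧
      ∃ a b : F, ∀ u ∈ U, a ≤ f u ∧ f u ≤ b) :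
    ∃ a b : F, ∀ x ∈ K, a ≤ f x ∧ f x ≤ b := by
  classical
  obtain ⟨hlt, hadd, hmul⟩ := hfield
  by_contra hcon
  obtain ⟨a0, b0, hKb⟩ := hKbdd
  set D : F → Set (Fin m → F) := fun t => {x | x ∈ K ∧ (t ≤ f x ∨ f x ≤ -t)} with hD
  have hDanti : ∀ s t : F, 0 < s → s ≤ t → D t ⊆ D s := by
    rintro s t hs hst x ⟨hx, h⟩
    refine ⟨hx, ?_⟩
    rcases h with h | h
    · left; linarith
    · right; linarith
  have hDne : ∀ t : F, 0 < t → (D t).Nonempty := by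
    intro t _
    by_contra hemp
    rw [Set.not_nonempty_iff_eq_empty] at hemp
    refine hcon ⟨-t, t, fun x hx => ?_⟩
    have hxD : x ∉ D t := by rw [hemp]; exact Set.notMem_empty x
    rw [hD] at hxD
    simp only [Set.mem_setOf_eq, not_and, not_or, not_le] at hxD
    obtain ⟨h1, h2⟩ := hxD hx
    exact ⟨le_of_lt h2, le_of_lt h1⟩
  have hDbd : ∀ t : F, 0 < t → ∀ y ∈ D t, ∀ j, a0 ≤ y j ∧ y j ≤ b0 :=
    fun t _ y hy j => hKb y hy.1 j
  -- definability of the family D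
  have hDdef : IsDef L {v : Fin 1 ⊕ Fin m → F |
      0 < v (Sum.inl 0) ∧ v ∘ Sum.inr ∈ D (v (Sum.inl 0))} := by
    set e₅ : (Fin m ⊕ Unit) → ((Fin 1 ⊕ Fin m) ⊕ Fin 3) :=
      Sum.elim (fun j => Sum.inl (Sum.inr j)) (fun _ => Sum.inr 0) with he₅
    set G : Set (Fin m ⊕ Unit → F) :=
      {v | v ∘ Sum.inl ∈ K ∧ f (v ∘ Sum.inl) = v (Sum.inr ())} with hG
    have hGdef : IsDef L G := hfdef
    set R2 : Set ((Fin 1 ⊕ Fin m) ⊕ Fin 3 → F) :=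
      {V | V ∘ e₅ ∈ G ∧ V (Sum.inr 2) = 0 ∧
        (V (Sum.inl (Sum.inl 0)) ≤ V (Sum.inr 0) ∨
          (V (Sum.inl (Sum.inl 0)) + V (Sum.inr 1) = V (Sum.inr 2) ∧
            V (Sum.inr 0) ≤ V (Sum.inr 1)))} with hR2
    have hR2def : IsDef L R2 := by
      have hEq : R2 = {V : (Fin 1 ⊕ Fin m) ⊕ Fin 3 → F | V ∘ e₅ ∈ G} ∩
          ({V | V (Sum.inr 2) = 0} ∩
          ({V | V (Sum.inl (Sum.inl 0)) ≤ V (Sum.inr 0)} ∪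
          ({V | V (Sum.inl (Sum.inl 0)) + V (Sum.inr 1) = V (Sum.inr 2)} ∩
          {V | V (Sum.inr 0) ≤ V (Sum.inr 1)}))) := by
        ext V
        simp only [hR2, Set.mem_inter_iff, Set.mem_union, Set.mem_setOf_eq]
      rw [hEq]
      exact (hGdef.pull e₅).inter ((isDef_const (Sum.inr 2) 0).inter
        ((isDef_le hlt (Sum.inl (Sum.inl 0)) (Sum.inr 0)).union
        ((isDef_add hadd (Sum.inl (Sum.inl 0)) (Sum.inr 1) (Sum.inr 2)).inter
        (isDef_le hlt (Sum.inr 0) (Sum.inr 1)))))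
    have h0def : IsDef L {v : Fin 1 ⊕ Fin m → F | 0 < v (Sum.inl 0)} :=
      isDef_const_lt hlt 0 (Sum.inl 0)
    have hfin : IsDef L _ := h0def.inter hR2def.exists_elim
    convert hfin using 1
    ext v
    simp only [Set.mem_inter_iff, Set.mem_setOf_eq]
    constructor
    · rintro ⟨hpos, hxK, hor⟩
      refine ⟨hpos, ![f (v ∘ Sum.inr), -(v (Sum.inl 0)), 0], ?_⟩
      have h5 : (Sum.elim v ![f (v ∘ Sum.inr), -(v (Sum.inl 0)), 0] ∘ e₅) ∘ Sum.inl
          = v ∘ Sum.inr := by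
        funext j; simp [he₅]
      refine ⟨⟨?_, ?_⟩, by simp, ?_⟩
      · rw [h5]; exact hxK
      · rw [h5]; simp [he₅]
      · rcases hor with h | h
        · left; simpa using h
        · right
          constructor
          · simp
          · simpa using h
    · rintro ⟨hpos, w, ⟨hmemK, hfeq⟩, hw2, hor⟩
      have h5 : (Sum.elim v w ∘ e₅) ∘ Sum.inl = v ∘ Sum.inr := by
        funext j; simp [he₅]
      rw [h5] at hmemK hfeq
      have h6 : (Sum.elim v w ∘ e₅) (Sum.inr ()) = w 0 := by simp [he₅]
      rw [h6] at hfeq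
      simp only [Sum.elim_inl, Sum.elim_inr] at hw2 hor
      refine ⟨hpos, hmemK, ?_⟩
      rcases hor with h | h
      · left; rw [hfeq]; exact h
      · right
        obtain ⟨hadd', hle'⟩ := h
        rw [hw2] at hadd'
        have : w 1 = -(v (Sum.inl 0)) := by linarith
        rw [hfeq, ← this]
        exact hle'
  obtain ⟨x, hx⟩ := exists_cluster hlt hadd hmul hdc a0 b0 D hDdef hDanti hDne hDbd
  have hxK : x ∈ K := by
    have h2 : closure (D 1) ⊆ K := by
      rw [← hKclosed.closure_eq]
      exact closure_mono fun z hz => hz.1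
    exact h2 (hx 1 one_pos)
  obtain ⟨U, hUdef, hUK, hxU, ⟨V, hV, hUV⟩, a, b, hab⟩ := hloc x hxK
  set r : F := max 1 (max (b + 1) (1 - a)) with hr
  have hr0 : (0:F) < r := lt_of_lt_of_le one_pos (le_max_left _ _)
  have hxV : x ∈ V := by rw [hUV] at hxU; exact hxU.2
  obtain ⟨z, hzV, hzD⟩ := mem_closure_iff_nhds.mp (hx r hr0) V (hV.mem_nhds hxV)
  have hzU : z ∈ U := by rw [hUV]; exact ⟨hzD.1, hzV⟩
  obtain ⟨haz, hbz⟩ := hab z hzU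
  rcases hzD.2 with h | h
  · have hbr : b + 1 ≤ r := le_trans (le_max_left _ _) (le_max_right _ _)
    linarith
  · have har : 1 - a ≤ r := le_trans (le_max_right _ _) (le_max_right _ _)
    linarith
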